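/- Correctness of forward-mode AD for integer powers: let g : ℝ^N → ℝ be twice continuously differentiable at a ∈ ℝ^N, n ≥ 1 a natural number, and T_a(h) = (h(a), ∇h(a), Hess h(a)) ∈ D2(N). Then T_a(gⁿ) = (T_a(g))ⁿ in D2(N); in particular ∇(gⁿ)(a) = n·g(a)^{n−1}·∇g(a) and Hess(gⁿ)(a) = n(n−1)·g(a)^{n−2}·∇g(a)∇g(a)ᵀ + n·g(a)^{n−1}·Hess g(a). -/

import Mathlib

/-- Second-order dual numbers of dimension `N`: a value, a gradient part, and a Hessian part. -/
abbrev D2 (N : ℕ) : Type := ℝ × (Fin N → ℝ) × Matrix (Fin N) (Fin N) ℝ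

/-- Multiplication of second-order dual numbers. -/
noncomputable def D2.mul {N : ℕ} (x y : D2 N) : D2 N :=
  (x.1 * y.1,
   x.1 • y.2.1 + y.1 • x.2.1,
   y.1 • x.2.2 + x.1 • y.2.2 + Matrix.vecMulVec x.2.1 y.2.1 + Matrix.vecMulVec y.2.1 x.2.1)

/-- The unit element `(1, 0, 0)`. -/
noncomputable def D2.one (N : ℕ) : D2 N := (1, 0, 0)

/-- Powers of a second-order dual number, by iterated multiplication. -/
noncomputable def D2.npow {N : ℕ} (x : D2 N) : ℕ → D2 N
  | 0 => D2.one N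
  | n + 1 => D2.mul (D2.npow x n) x

/-- The gradient of a scalar function on `ℝ^N`. -/
noncomputable def grad {N : ℕ} (h : (Fin N → ℝ) → ℝ) (a : Fin N → ℝ) : Fin N → ℝ :=
  fun i => fderiv ℝ h a (Pi.single i 1)

/-- The Hessian matrix of a scalar function on `ℝ^N`. -/
noncomputable def hess {N : ℕ} (h : (Fin N → ℝ) → ℝ) (a : Fin N → ℝ) :
    Matrix (Fin N) (Fin N) ℝ :=
  Matrix.of fun i j => fderiv ℝ (fun x => fderiv ℝ h x (Pi.single j 1)) a (Pi.single i 1)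

/-- The second-order dual lift `T_a(h) = (h(a), ∇h(a), Hess h(a))`. -/
noncomputable def dualLift {N : ℕ} (h : (Fin N → ℝ) → ℝ) (a : Fin N → ℝ) : D2 N :=
  (h a, grad h a, hess h a)

lemma grad_mul {N : ℕ} {f g : (Fin N → ℝ) → ℝ} {a : Fin N → ℝ}
    (hf : DifferentiableAt ℝ f a) (hg : DifferentiableAt ℝ g a) :
    grad (fun x => f x * g x) a = f a • grad g a + g a • grad f a := by
  funext i
  simp [grad, fderiv_fun_mul hf hg]

lemma hess_mul {N : ℕ} {f g : (Fin N → ℝ) → ℝ} {a : Fin N → ℝ}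
    (hf : ContDiffAt ℝ 2 f a) (hg : ContDiffAt ℝ 2 g a) :
    hess (fun x => f x * g x) a =
      g a • hess f a + f a • hess g a + Matrix.vecMulVec (grad f a) (grad g a)
        + Matrix.vecMulVec (grad g a) (grad f a) := by
  ext i j
  have hfd : DifferentiableAt ℝ (fun x => fderiv ℝ f x (Pi.single j 1)) a :=
    (((hf.fderiv_right (m := 1) (by norm_num)).differentiableAt one_ne_zero)).clm_apply
      (differentiableAt_const _)
  have hgd : DifferentiableAt ℝ (fun x => fderiv ℝ g x (Pi.single j 1)) a :=
    (((hg.fderiv_right (m := 1) (by norm_num)).differentiableAt one_ne_zero)).clm_apply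
      (differentiableAt_const _)
  have hfa : DifferentiableAt ℝ f a := hf.differentiableAt two_ne_zero
  have hga : DifferentiableAt ℝ g a := hg.differentiableAt two_ne_zero
  have hev : (fun x => fderiv ℝ (fun y => f y * g y) x (Pi.single j 1)) =ᶠ[nhds a]
      fun x => f x * fderiv ℝ g x (Pi.single j 1) + g x * fderiv ℝ f x (Pi.single j 1) := by
    filter_upwards [hf.eventually (by norm_num), hg.eventually (by norm_num)] with x hfx hgx
    rw [fderiv_fun_mul (hfx.differentiableAt two_ne_zero) (hgx.differentiableAt two_ne_zero)]
    simp [mul_comm]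
  have key : fderiv ℝ (fun x => fderiv ℝ (fun y => f y * g y) x (Pi.single j 1)) a
      = fderiv ℝ (fun x => f x * fderiv ℝ g x (Pi.single j 1)
          + g x * fderiv ℝ f x (Pi.single j 1)) a := hev.fderiv_eq
  simp only [hess, Matrix.of_apply, key, Matrix.add_apply, Matrix.smul_apply,
    Matrix.vecMulVec_apply, grad, smul_eq_mul]
  rw [fderiv_fun_add (hfa.fun_mul hgd) (hga.fun_mul hfd), fderiv_fun_mul hfa hgd, fderiv_fun_mul hga hfd]
  simp [mul_comm]
  ring

lemma dualLift_mul {N : ℕ} {f g : (Fin N → ℝ) → ℝ} {a : Fin N → ℝ}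
    (hf : ContDiffAt ℝ 2 f a) (hg : ContDiffAt ℝ 2 g a) :
    dualLift (fun x => f x * g x) a = D2.mul (dualLift f a) (dualLift g a) := by
  refine Prod.ext rfl (Prod.ext ?_ ?_)
  · exact grad_mul (hf.differentiableAt two_ne_zero) (hg.differentiableAt two_ne_zero)
  · simpa [D2.mul, add_assoc, dualLift] using hess_mul hf hg

lemma dualLift_one {N : ℕ} (a : Fin N → ℝ) :
    dualLift (fun _ : Fin N → ℝ => (1 : ℝ)) a = D2.one N := by
  refine Prod.ext rfl (Prod.ext ?_ ?_)
  · funext i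
    show fderiv ℝ (fun _ : Fin N → ℝ => (1:ℝ)) a (Pi.single i 1) = 0
    simp
  · ext i j
    show fderiv ℝ (fun x => fderiv ℝ (fun _ : Fin N → ℝ => (1:ℝ)) x (Pi.single j 1)) a
        (Pi.single i 1) = 0
    simp

lemma dualLift_pow_aux {N : ℕ} (g : (Fin N → ℝ) → ℝ) (a : Fin N → ℝ)
    (hg : ContDiffAt ℝ 2 g a) (n : ℕ) :
    dualLift (fun x => g x ^ n) a = D2.npow (dualLift g a) n := by
  induction n with
  | zero => simpa [D2.npow] using dualLift_one a
  | succ n ih =>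
    have : (fun x => g x ^ (n + 1)) = fun x => g x ^ n * g x := by
      funext x; ring
    rw [this, dualLift_mul (hg.pow n) hg, ih, D2.npow]

lemma npow_formula {N : ℕ} (v : ℝ) (d : Fin N → ℝ) (H : Matrix (Fin N) (Fin N) ℝ)
    (n : ℕ) (hn : 1 ≤ n) :
    D2.npow ((v, d, H) : D2 N) n =
      (v ^ n, ((n : ℝ) * v ^ (n - 1)) • d,
        ((n : ℝ) * ((n : ℝ) - 1) * v ^ (n - 2)) • Matrix.vecMulVec d d
          + ((n : ℝ) * v ^ (n - 1)) • H) := by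
  induction n with
  | zero => omega
  | succ n ih =>
    rcases Nat.eq_zero_or_pos n with rfl | hn1
    · refine Prod.ext (by simp [D2.npow, D2.one, D2.mul]) (Prod.ext ?_ ?_)
      · funext i
        simp [D2.npow, D2.one, D2.mul]
      · ext i j
        simp only [D2.npow, D2.one, D2.mul, Matrix.add_apply, Matrix.smul_apply,
          Matrix.vecMulVec_apply, Pi.zero_apply, Pi.smul_apply, smul_eq_mul]
        norm_num
    · rw [D2.npow, ih hn1]
      have e1 : v * v ^ (n - 1) = v ^ n := by
        rw [← pow_succ']; congr 1; omega
      refine Prod.ext (by simp [D2.mul, pow_succ]) (Prod.ext ?_ ?_)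
      · funext i
        simp only [D2.mul, Pi.add_apply, Pi.smul_apply, smul_eq_mul, Nat.add_sub_cancel]
        push_cast
        linear_combination ((n : ℝ) * d i) * e1
      · ext i j
        rcases Nat.eq_zero_or_pos (n - 1) with h0 | hn2
        · have : n = 1 := by omega
          subst this
          simp only [D2.mul, Matrix.add_apply, Matrix.smul_apply, Matrix.vecMulVec_apply,
            Pi.smul_apply, smul_eq_mul]
          norm_num
          ring
        · have e2 : v * v ^ (n - 2) = v ^ (n - 1) := by
            rw [← pow_succ']; congr 1; omega
          simp only [D2.mul, Matrix.add_apply, Matrix.smul_apply, Matrix.vecMulVec_apply,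
            Pi.smul_apply, smul_eq_mul, Nat.add_sub_cancel,
            show n + 1 - 2 = n - 1 from by omega]
          push_cast
          linear_combination ((n : ℝ) * ((n : ℝ) - 1) * (d i * d j)) * e2
            + ((n : ℝ) * H i j) * e1

/-- Correctness of forward-mode AD for integer powers: `T_a(gⁿ) = (T_a(g))ⁿ` in `D2 N`,
with the explicit power formulas for the gradient and the Hessian. -/
theorem dualLift_pow {N : ℕ} (g : (Fin N → ℝ) → ℝ) (a : Fin N → ℝ)
    (hg : ContDiffAt ℝ 2 g a) (n : ℕ) (hn : 1 ≤ n) :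
    dualLift (fun x => g x ^ n) a = D2.npow (dualLift g a) n ∧
    grad (fun x => g x ^ n) a = ((n : ℝ) * g a ^ (n - 1)) • grad g a ∧
    hess (fun x => g x ^ n) a =
      ((n : ℝ) * ((n : ℝ) - 1) * g a ^ (n - 2)) • Matrix.vecMulVec (grad g a) (grad g a)
        + ((n : ℝ) * g a ^ (n - 1)) • hess g a := by
  have h1 := dualLift_pow_aux g a hg n
  have key := h1.trans (npow_formula (g a) (grad g a) (hess g a) n hn)
  exact ⟨h1, congrArg (fun p : D2 N => p.2.1) key, congrArg (fun p : D2 N => p.2.2) key⟩
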